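/- Let G be a non-bipartite k-extendable graph on ν = 4k vertices with minimum degree δ(G) ≥ 3k. Then G is 2k-factor-critical. -/

import Mathlib

open SimpleGraph

/-- `G` has a perfect matching. -/
def HasPM {W : Type*} (G : SimpleGraph W) : Prop :=
  ∃ M : G.Subgraph, M.IsPerfectMatching

/-- `G` is `k`-extendable: `G` is connected, has a matching of size `k`, and every
matching of size `k` extends to a perfect matching. -/
def IsKExtendable {W : Type*} (G : SimpleGraph W) (k : ℕ) : Prop :=
  G.Connected ∧
  (∃ M : G.Subgraph, M.IsMatching ∧ M.verts.ncard = 2 * k) ∧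
  ∀ M : G.Subgraph, M.IsMatching → M.verts.ncard = 2 * k →
    ∃ P : G.Subgraph, P.IsPerfectMatching ∧ M ≤ P

/-- `G` is `n`-factor-critical: deleting any `n` vertices leaves a graph with a
perfect matching. -/
def IsNFactorCritical {W : Type*} (G : SimpleGraph W) (n : ℕ) : Prop :=
  ∀ S : Finset W, S.card = n → HasPM (G.induce ((↑S : Set W)ᶜ))

/-- The independence number of `G`. -/
noncomputable def indepNum {W : Type*} (G : SimpleGraph W) : ℕ :=
  sSup {n | ∃ s : Finset W, (∀ u ∈ s, ∀ v ∈ s, ¬ G.Adj u v) ∧ s.card = n}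

/-- The number of odd connected components of `G`. -/
noncomputable def numOddComponents {W : Type*} (G : SimpleGraph W) : ℕ :=
  Nat.card {c : G.ConnectedComponent // Odd (Nat.card c.supp)}

/-- `G` is `k½`-extendable: `G` is connected and for every vertex `v`, `G - v` has a
matching of size `k` and every matching of size `k` in `G - v` extends to a perfect
matching of `G - v`. -/
def IsHalfExtendable {W : Type*} (G : SimpleGraph W) (k : ℕ) : Prop :=
  G.Connected ∧
  ∀ v : W,
    (∃ M : (G.induce ({v} : Set W)ᶜ).Subgraph, M.IsMatching ∧ M.verts.ncard = 2 * k) ∧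
    ∀ M : (G.induce ({v} : Set W)ᶜ).Subgraph, M.IsMatching → M.verts.ncard = 2 * k →
      ∃ P : (G.induce ({v} : Set W)ᶜ).Subgraph, P.IsPerfectMatching ∧ M ≤ P

/-- The join of two graphs: all edges between the two vertex classes are added. -/
def graphJoin {α β : Type*} (G : SimpleGraph α) (H : SimpleGraph β) :
    SimpleGraph (α ⊕ β) :=
  SimpleGraph.fromRel (fun a b =>
    match a, b with
    | Sum.inl u, Sum.inl v => G.Adj u v
    | Sum.inr u, Sum.inr v => H.Adj u v
    | _, _ => True)

/-- The disjoint union of two graphs. -/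
def graphUnion {α β : Type*} (G : SimpleGraph α) (H : SimpleGraph β) :
    SimpleGraph (α ⊕ β) :=
  SimpleGraph.fromRel (fun a b =>
    match a, b with
    | Sum.inl u, Sum.inl v => G.Adj u v
    | Sum.inr u, Sum.inr v => H.Adj u v
    | _, _ => False)

/-- The join `G ∨ K₁`: one new vertex joined to every vertex of `G`. -/
def joinK1 {W : Type*} (G : SimpleGraph W) : SimpleGraph (W ⊕ Unit) :=
  graphJoin G (⊥ : SimpleGraph Unit)

/-- `G` is the join of a graph on `n` vertices with the disjoint union of two cliques
of size `m` (intrinsic formulation of `G = G₀ ∨ (K_m ∪ K_m)`). -/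
def IsJoinTwoCliques {W : Type*} [Fintype W] [DecidableEq W] (G : SimpleGraph W) (n m : ℕ) : Prop :=
  ∃ S A B : Finset W,
    Disjoint S A ∧ Disjoint S B ∧ Disjoint A B ∧ S ∪ A ∪ B = Finset.univ ∧
    S.card = n ∧ A.card = m ∧ B.card = m ∧
    (∀ u ∈ A, ∀ v ∈ A, u ≠ v → G.Adj u v) ∧
    (∀ u ∈ B, ∀ v ∈ B, u ≠ v → G.Adj u v) ∧
    (∀ u ∈ A, ∀ v ∈ B, ¬ G.Adj u v) ∧
    (∀ u ∈ S, ∀ v ∈ A ∪ B, G.Adj u v)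

/-- `A` induces in `G` the disjoint union of two factor-critical connected components,
each of size at least `minSize`. -/
def TwoFCComponents {W : Type*} [DecidableEq W] (G : SimpleGraph W) (A : Finset W) (minSize : ℕ) : Prop :=
  ∃ B C : Finset W,
    Disjoint B C ∧ B ∪ C = A ∧ minSize ≤ B.card ∧ minSize ≤ C.card ∧
    (∀ u ∈ B, ∀ v ∈ C, ¬ G.Adj u v) ∧
    (G.induce (↑B : Set W)).Connected ∧ (G.induce (↑C : Set W)).Connected ∧
    IsNFactorCritical (G.induce (↑B : Set W)) 1 ∧
    IsNFactorCritical (G.induce (↑C : Set W)) 1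


section AuxPM

variable {W : Type*}

/-- A set carrying a fixed-point-free adjacency-respecting involution. -/
private def GoodSet (H : SimpleGraph W) (s : Finset W) : Prop :=
  ∃ f : W → W, ∀ y ∈ s, f y ∈ s ∧ f (f y) = y ∧ f y ≠ y ∧ H.Adj y (f y)

private lemma even_card_of_fpf [DecidableEq W] (s : Finset W) (f : W → W)
    (hf : ∀ y ∈ s, f y ∈ s ∧ f (f y) = y ∧ f y ≠ y) : Even s.card := by
  classical
  induction s using Finset.strongInduction with
  | _ s ih =>
    rcases s.eq_empty_or_nonempty with rfl | ⟨x, hx⟩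
    · simp
    · obtain ⟨hfx, hffx, hnex⟩ := hf x hx
      have hsub : s \ {x, f x} ⊂ s := by
        apply Finset.sdiff_ssubset (by simp [Finset.insert_subset_iff, hx, hfx])
        simp
      have hcard : s.card = (s \ {x, f x}).card + 2 := by
        have h2 : ({x, f x} : Finset W) ⊆ s := by
          simp [Finset.insert_subset_iff, hx, hfx]
        have h3 := Finset.card_sdiff_of_subset h2
        have h4 := Finset.card_le_card h2
        have hc2 : ({x, f x} : Finset W).card = 2 := by
          rw [Finset.card_insert_of_notMem (by simp [Ne.symm hnex]), Finset.card_singleton]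
        rw [hc2] at h3 h4
        omega
      have hgood : ∀ y ∈ s \ {x, f x}, f y ∈ s \ {x, f x} ∧ f (f y) = y ∧ f y ≠ y := by
        intro y hy
        rw [Finset.mem_sdiff] at hy
        obtain ⟨hys, hynot⟩ := hy
        simp only [Finset.mem_insert, Finset.mem_singleton, not_or] at hynot
        obtain ⟨hfy, hffy, hney⟩ := hf y hys
        refine ⟨?_, hffy, hney⟩
        rw [Finset.mem_sdiff]
        refine ⟨hfy, ?_⟩
        simp only [Finset.mem_insert, Finset.mem_singleton, not_or]
        constructor
        · intro h; exact hynot.2 (by have := congrArg f h; rwa [hffy] at this)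
        · intro h; exact hynot.1 (by have := congrArg f h; rwa [hffy, hffx] at this)
      have hev := ih _ hsub (fun y hy => hgood y hy)
      rcases hev with ⟨a, ha⟩
      exact ⟨a + 1, by omega⟩

private lemma goodset_insert_pair [DecidableEq W] (H : SimpleGraph W) (s : Finset W)
    (hs : GoodSet H s) (u w : W) (hu : u ∉ s) (hw : w ∉ s) (huw : H.Adj u w) :
    GoodSet H (insert u (insert w s)) := by
  classical
  obtain ⟨f, hf⟩ := hs
  have hne : u ≠ w := huw.ne
  set g : W → W := fun y => if y = u then w else if y = w then u else f y with hg
  have egu : g u = w := by simp [hg]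
  have egw : g w = u := by simp [hg, Ne.symm hne]
  have egy : ∀ y, y ≠ u → y ≠ w → g y = f y := by
    intro y h1 h2; simp [hg, h1, h2]
  refine ⟨g, ?_⟩
  intro y hy
  simp only [Finset.mem_insert] at hy
  rcases hy with rfl | rfl | hys
  · rw [egu]
    refine ⟨by simp, by rw [egw], ?_, ?_⟩
    · first | exact hne | exact Ne.symm hne
    · first | exact huw | exact huw.symm
  · rw [egw]
    refine ⟨by simp, by rw [egu], ?_, ?_⟩
    · first | exact hne | exact Ne.symm hne
    · first | exact huw | exact huw.symm
  · obtain ⟨hfy, hffy, hney, hadjy⟩ := hf y hys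
    have h1 : y ≠ u := fun h => hu (h ▸ hys)
    have h2 : y ≠ w := fun h => hw (h ▸ hys)
    have h3 : f y ≠ u := fun h => hu (h ▸ hfy)
    have h4 : f y ≠ w := fun h => hw (h ▸ hfy)
    rw [egy y h1 h2]
    exact ⟨by simp [hfy], by rw [egy _ h3 h4, hffy], hney, hadjy⟩

private lemma goodset_insert_aug [DecidableEq W] (H : SimpleGraph W) (s : Finset W)
    (f : W → W) (hf : ∀ y ∈ s, f y ∈ s ∧ f (f y) = y ∧ f y ≠ y ∧ H.Adj y (f y))
    (u v x : W) (hu : u ∉ s) (hv : v ∉ s) (huv : u ≠ v) (hx : x ∈ s)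
    (hux : H.Adj u x) (hvfx : H.Adj v (f x)) :
    GoodSet H (insert u (insert v s)) := by
  classical
  obtain ⟨hfx, hffx, hnex, -⟩ := hf x hx
  have hxu : x ≠ u := fun h => hu (h ▸ hx)
  have hxv : x ≠ v := fun h => hv (h ▸ hx)
  have hfxu : f x ≠ u := fun h => hu (h ▸ hfx)
  have hfxv : f x ≠ v := fun h => hv (h ▸ hfx)
  set g : W → W := fun y => if y = u then x else if y = x then u else
      if y = v then f x else if y = f x then v else f y with hg
  have egu : g u = x := by simp [hg]
  have egx : g x = u := by simp [hg, hxu]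
  have egv : g v = f x := by simp [hg, Ne.symm huv, Ne.symm hxv]
  have egfx : g (f x) = v := by simp [hg, hfxu, hnex, hfxv]
  have egy : ∀ y, y ≠ u → y ≠ x → y ≠ v → y ≠ f x → g y = f y := by
    intro y h1 h2 h3 h4; simp [hg, h1, h2, h3, h4]
  refine ⟨g, ?_⟩
  intro y hy
  simp only [Finset.mem_insert] at hy
  have mem : ∀ z, z ∈ s → z ∈ insert u (insert v s) := fun z hz => by simp [hz]
  rcases hy with rfl | rfl | hys
  · rw [egu]
    refine ⟨mem x hx, by rw [egx], ?_, ?_⟩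
    · first | exact hxu | exact Ne.symm hxu
    · first | exact hux | exact hux.symm
  · rw [egv]
    refine ⟨mem _ hfx, by rw [egfx], ?_, ?_⟩
    · first | exact hfxv | exact Ne.symm hfxv
    · first | exact hvfx | exact hvfx.symm
  · by_cases hyx : y = x
    · subst hyx
      rw [egx]
      refine ⟨by simp, by rw [egu], ?_, ?_⟩
      · first | exact hxu | exact Ne.symm hxu
      · first | exact hux | exact hux.symm
    · by_cases hyfx : y = f x
      · subst hyfx
        rw [egfx]
        refine ⟨by simp, by rw [egv], ?_, ?_⟩
        · first | exact hfxv | exact Ne.symm hfxv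
        · first | exact hvfx | exact hvfx.symm
      · obtain ⟨hfy, hffy, hney, hadjy⟩ := hf y hys
        have h1 : y ≠ u := fun h => hu (h ▸ hys)
        have h2 : y ≠ v := fun h => hv (h ▸ hys)
        have h3 : f y ≠ u := fun h => hu (h ▸ hfy)
        have h4 : f y ≠ v := fun h => hv (h ▸ hfy)
        have h5 : f y ≠ x := fun h => hyfx (by
          have := congrArg f h; rwa [hffy] at this)
        have h6 : f y ≠ f x := fun h => hyx (by
          have := congrArg f h; rwa [hffy, hffx] at this)
        rw [egy y h1 hyx h2 hyfx]
        exact ⟨mem _ hfy, by rw [egy _ h3 h5 h4 h6, hffy], hney, hadjy⟩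

/-- A graph on `2*m` vertices in which every vertex has at least `m` neighbours has a
perfect matching. -/
private lemma pm_of_min_degree [Fintype W] [DecidableEq W] (H : SimpleGraph W) (m : ℕ)
    (hcard : Fintype.card W = 2 * m)
    (hdeg : ∀ v : W, ∃ t : Finset W, m ≤ t.card ∧ ∀ x ∈ t, H.Adj v x) :
    ∃ M : H.Subgraph, M.IsPerfectMatching := by
  classical
  -- take a GoodSet of maximal cardinality
  have hne : (Finset.univ.filter (fun s : Finset W => GoodSet H s)).Nonempty := by
    refine ⟨∅, ?_⟩
    simp only [Finset.mem_filter, Finset.mem_univ, true_and]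
    exact ⟨id, by simp⟩
  obtain ⟨s, hsmem, hsmax⟩ :=
    Finset.exists_max_image _ (fun s : Finset W => s.card) hne
  simp only [Finset.mem_filter, Finset.mem_univ, true_and] at hsmem
  obtain ⟨f, hf⟩ := hsmem
  have hmax : ∀ t : Finset W, GoodSet H t → t.card ≤ s.card := by
    intro t ht
    exact hsmax t (by simp only [Finset.mem_filter, Finset.mem_univ, true_and]; exact ht)
  -- any neighbour of a vertex outside s lies in s
  have hnbr : ∀ u, u ∉ s → ∀ w, H.Adj u w → w ∈ s := by
    intro u hu w hadj
    by_contra hw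
    have hgood := goodset_insert_pair H s ⟨f, hf⟩ u w hu hw hadj
    have hle := hmax _ hgood
    have hune : u ∉ insert w s := by simp [hadj.ne, hu]
    rw [Finset.card_insert_of_notMem hune, Finset.card_insert_of_notMem hw] at hle
    omega
  -- s must be everything
  by_cases hsu : s = Finset.univ
  · subst hsu
    refine ⟨⟨Set.univ, fun a b => H.Adj a b ∧ f a = b, fun h => h.1,
        fun _ => Set.mem_univ _, ?_⟩, ?_, fun _ => Set.mem_univ _⟩
    · constructor; intro a b hab
      obtain ⟨hadj, hfab⟩ := hab
      obtain ⟨-, hffa, -, -⟩ := hf a (Finset.mem_univ a)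
      exact ⟨hadj.symm, by rw [← hfab, hffa]⟩
    intro a _
    obtain ⟨-, hffa, -, hadja⟩ := hf a (Finset.mem_univ a)
    refine ⟨f a, ⟨hadja, rfl⟩, ?_⟩
    rintro y ⟨-, rfl⟩
    rfl
  · exfalso
    -- there are at least two vertices outside s
    have hseven : Even s.card := even_card_of_fpf s f
      (fun y hy => ⟨(hf y hy).1, (hf y hy).2.1, (hf y hy).2.2.1⟩)
    have hcompl : Even (Finset.univ \ s).card := by
      have : (Finset.univ \ s).card = Fintype.card W - s.card := by
        rw [Finset.card_sdiff_of_subset (Finset.subset_univ s), Finset.card_univ]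
      rw [this, hcard]
      rcases hseven with ⟨a, ha⟩
      have hle : s.card ≤ Fintype.card W := by
        rw [← Finset.card_univ]; exact Finset.card_le_card (Finset.subset_univ s)
      refine ⟨m - a, ?_⟩
      omega
    have hpos : (Finset.univ \ s).Nonempty := by
      rw [Finset.sdiff_nonempty]
      intro h
      exact hsu (Finset.univ_subset_iff.mp h)
    have h2 : 1 < (Finset.univ \ s).card := by
      rcases hcompl with ⟨a, ha⟩
      have := Finset.card_pos.mpr hpos
      omega
    obtain ⟨u, hu, v, hv, huv⟩ := Finset.one_lt_card.mp h2
    rw [Finset.mem_sdiff] at hu hv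
    have hus : u ∉ s := hu.2
    have hvs : v ∉ s := hv.2
    -- counting argument: find x ∈ s with u~x, v~f x (or symmetric)
    set wgt : W → ℕ := fun x =>
      (if H.Adj u x then 1 else 0) + (if H.Adj v x then 1 else 0) with hwgt
    have hsum_ge : 2 * m ≤ ∑ x ∈ s, wgt x := by
      obtain ⟨tu, htuc, htu⟩ := hdeg u
      obtain ⟨tv, htvc, htv⟩ := hdeg v
      have h1 : tu ⊆ s.filter (fun x => H.Adj u x) := by
        intro x hx
        exact Finset.mem_filter.mpr ⟨hnbr u hus x (htu x hx), htu x hx⟩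
      have h2 : tv ⊆ s.filter (fun x => H.Adj v x) := by
        intro x hx
        exact Finset.mem_filter.mpr ⟨hnbr v hvs x (htv x hx), htv x hx⟩
      have e1 : ∑ x ∈ s, (if H.Adj u x then 1 else 0) = (s.filter (fun x => H.Adj u x)).card := by
        rw [Finset.card_filter]
      have e2 : ∑ x ∈ s, (if H.Adj v x then 1 else 0) = (s.filter (fun x => H.Adj v x)).card := by
        rw [Finset.card_filter]
      have := Finset.card_le_card h1
      have := Finset.card_le_card h2
      calc 2 * m = m + m := by ring
        _ ≤ (s.filter (fun x => H.Adj u x)).card + (s.filter (fun x => H.Adj v x)).card := by omega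
        _ = ∑ x ∈ s, wgt x := by rw [hwgt, Finset.sum_add_distrib, e1, e2]
    have key : ∃ x ∈ s, (H.Adj u x ∧ H.Adj v (f x)) ∨ (H.Adj u (f x) ∧ H.Adj v x) := by
      by_contra hkey
      push_neg at hkey
      have hpt : ∀ x ∈ s, wgt x + wgt (f x) ≤ 2 := by
        intro x hx
        have := hkey x hx
        rw [hwgt]
        by_cases a1 : H.Adj u x <;> by_cases a2 : H.Adj v x <;>
          by_cases a3 : H.Adj u (f x) <;> by_cases a4 : H.Adj v (f x) <;>
          simp_all <;> omega
      have hperm : ∑ x ∈ s, wgt (f x) = ∑ x ∈ s, wgt x := by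
        refine Finset.sum_nbij' f f ?_ ?_ ?_ ?_ ?_
        · intro a ha; exact (hf a ha).1
        · intro a ha; exact (hf a ha).1
        · intro a ha; exact (hf a ha).2.1
        · intro a ha; exact (hf a ha).2.1
        · intro a ha; rfl
      have hsum2 : 2 * (∑ x ∈ s, wgt x) ≤ 2 * s.card := by
        have e3 : ∑ x ∈ s, (wgt x + wgt (f x))
            = (∑ x ∈ s, wgt x) + ∑ x ∈ s, wgt (f x) := Finset.sum_add_distrib
        have e4 : ∑ x ∈ s, (wgt x + wgt (f x)) ≤ ∑ _x ∈ s, 2 := Finset.sum_le_sum hpt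
        have e5 : ∑ _x ∈ s, (2 : ℕ) = 2 * s.card := by
          rw [Finset.sum_const, smul_eq_mul]; ring
        omega
      have hslt : s.card ≤ 2 * m - 2 := by
        have hsub : s ⊆ Finset.univ \ {u, v} := by
          intro x hx
          rw [Finset.mem_sdiff]
          refine ⟨Finset.mem_univ x, ?_⟩
          simp only [Finset.mem_insert, Finset.mem_singleton, not_or]
          exact ⟨fun h => hus (h ▸ hx), fun h => hvs (h ▸ hx)⟩
        have := Finset.card_le_card hsub
        rw [Finset.card_sdiff_of_subset (by simp), Finset.card_univ, hcard] at this
        have hc2 : ({u, v} : Finset W).card = 2 := by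
          rw [Finset.card_insert_of_notMem (by simp [huv]), Finset.card_singleton]
        omega
      have h7 : (Finset.univ \ s).card ≤ 2 * m := by
        rw [← hcard, ← Finset.card_univ]
        exact Finset.card_le_card (Finset.sdiff_subset)
      omega
    obtain ⟨x, hx, hcase⟩ := key
    have hadjuv : ¬ H.Adj u v := fun h => hvs (hnbr u hus v h)
    rcases hcase with ⟨h1, h2⟩ | ⟨h1, h2⟩
    · have hgood := goodset_insert_aug H s f hf u v x hus hvs huv hx h1 h2
      have hle := hmax _ hgood
      have hune : u ∉ insert v s := by simp [huv, hus]
      rw [Finset.card_insert_of_notMem hune, Finset.card_insert_of_notMem hvs] at hle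
      omega
    · have hgood := goodset_insert_aug H s f hf v u x hvs hus (Ne.symm huv) hx h2 h1
      have hle := hmax _ hgood
      have hvne : v ∉ insert u s := by simp [Ne.symm huv, hvs]
      rw [Finset.card_insert_of_notMem hvne, Finset.card_insert_of_notMem hus] at hle
      omega

end AuxPM

/-- A non-bipartite k-extendable graph on 4k vertices with δ(G) ≥ 3k is 2k-factor-critical. -/
theorem extendable_4k_minDegree_3k_factorCritical {V : Type*} [Fintype V] [DecidableEq V]
    (G : SimpleGraph V) [DecidableRel G.Adj] (k : ℕ)
    (hnb : ¬ G.Colorable 2) (hext : IsKExtendable G k)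
    (hcard : Fintype.card V = 4 * k) (hdeg : 3 * k ≤ G.minDegree) :
    IsNFactorCritical G (2 * k) := by
  classical
  intro S hS
  set H := G.induce ((↑S : Set V)ᶜ) with hH
  have hcardW : Fintype.card ((↑S : Set V)ᶜ : Set V) = 2 * k := by
    have h1 : Fintype.card ((↑S : Set V)ᶜ : Set V)
        = Fintype.card V - Fintype.card (↑S : Set V) := by
      rw [Fintype.card_compl_set]
    have h2 : Fintype.card (↑S : Set V) = S.card := by
      simp
    rw [h1, h2, hcard, hS]
    omega
  have hdegW : ∀ v : ((↑S : Set V)ᶜ : Set V), ∃ t : Finset ((↑S : Set V)ᶜ : Set V),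
      k ≤ t.card ∧ ∀ x ∈ t, H.Adj v x := by
    intro v
    have ht0card : k ≤ (G.neighborFinset v.1 \ S).card := by
      have h1 : 3 * k ≤ (G.neighborFinset v.1).card := by
        rw [SimpleGraph.card_neighborFinset_eq_degree]
        exact le_trans hdeg (G.minDegree_le_degree v.1)
      have h2 := Finset.le_card_sdiff S (G.neighborFinset v.1)
      omega
    refine ⟨(G.neighborFinset v.1 \ S).attach.image (fun x => ⟨x.1, ?_⟩), ?_, ?_⟩
    · have hx2 := x.2
      rw [Finset.mem_sdiff] at hx2
      simpa using hx2.2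
    · rw [Finset.card_image_of_injective _ (fun a b hab => Subtype.ext (by
        simpa using congrArg Subtype.val hab))]
      rw [Finset.card_attach]
      exact ht0card
    · intro x hx
      simp only [Finset.mem_image, Finset.mem_attach, true_and, Subtype.exists] at hx
      obtain ⟨a, ha, rfl⟩ := hx
      have haa : a ∈ G.neighborFinset v.1 := (Finset.mem_sdiff.mp ha).1
      rw [SimpleGraph.mem_neighborFinset] at haa
      exact haa
  exact pm_of_min_degree H k hcardW hdegW
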